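/- Let H be an M×K complex matrix with HᴴH invertible, u ∈ ℂ^K, and γ, P_a > 0. Set b = √γ · H(HᴴH)⁻¹u and, for δ > 0, x_δ = (HHᴴ + δ I_M)⁻¹ HHᴴ b. If δ > 0 is such that x_δᴴ x_δ = P_a, then x_δ minimizes φ(x) = ‖Hᴴx − √γ u‖² over the ball {x ∈ ℂ^M : xᴴx ≤ P_a}; that is, for every x ∈ ℂ^M with xᴴx ≤ P_a one has ‖Hᴴx_δ − √γ u‖² ≤ ‖Hᴴx − √γ u‖². -/

import Mathlib

open Matrix ComplexOrder

/-- Squared Euclidean (ℓ²) norm of a complex vector. -/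
noncomputable def sqNorm {n : ℕ} (v : Fin n → ℂ) : ℝ := ∑ i, ‖v i‖ ^ 2

/-- The zero-forcing vector `b = √γ · H (Hᴴ H)⁻¹ u`. -/
noncomputable def bVec {M K : ℕ} (H : Matrix (Fin M) (Fin K) ℂ) (u : Fin K → ℂ) (γ : ℝ) :
    Fin M → ℂ :=
  ((Real.sqrt γ : ℂ)) • (H * (Hᴴ * H)⁻¹).mulVec u

/-- The regularized zero-forcing vector `x_δ = (H Hᴴ + δ I)⁻¹ (H Hᴴ) b`. -/
noncomputable def xVec {M K : ℕ} (H : Matrix (Fin M) (Fin K) ℂ) (u : Fin K → ℂ) (γ δ : ℝ) :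
    Fin M → ℂ :=
  (((H * Hᴴ + (δ : ℂ) • (1 : Matrix (Fin M) (Fin M) ℂ))⁻¹) * (H * Hᴴ)).mulVec (bVec H u γ)

lemma sqNorm_eq {n : ℕ} (v : Fin n → ℂ) : sqNorm v = (star v ⬝ᵥ v).re := by
  simp only [sqNorm, dotProduct, Complex.re_sum, Pi.star_apply]
  congr 1; ext i
  rw [Complex.sq_norm, Complex.normSq_apply, Complex.star_def,
    Complex.mul_re, Complex.conj_re, Complex.conj_im]
  ring

lemma sqNorm_nonneg {n : ℕ} (v : Fin n → ℂ) : 0 ≤ sqNorm v :=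
  Finset.sum_nonneg fun i _ => by positivity

lemma sqNorm_add {n : ℕ} (v w : Fin n → ℂ) :
    sqNorm (v + w) = sqNorm v + sqNorm w + 2 * (star v ⬝ᵥ w).re := by
  rw [sqNorm_eq, sqNorm_eq, sqNorm_eq]
  have h : star w ⬝ᵥ v = star (star v ⬝ᵥ w) := by
    rw [star_dotProduct]
  rw [star_add, add_dotProduct, dotProduct_add, dotProduct_add]
  simp only [Complex.add_re, h, Complex.star_def, Complex.conj_re]
  ring

lemma posdef_A {M : ℕ} (H : Matrix (Fin M) (Fin M) ℂ) (hH : H.PosSemidef) {δ : ℝ} (hδ : 0 < δ) :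
    (H + (δ : ℂ) • (1 : Matrix (Fin M) (Fin M) ℂ)).PosDef := by
  refine Matrix.PosDef.posSemidef_add hH (posDef_iff_dotProduct_mulVec.mpr ⟨?_, fun x hx => ?_⟩)
  · rw [IsHermitian, conjTranspose_smul, conjTranspose_one]
    congr 1
    simp [Complex.ext_iff]
  · rw [smul_mulVec, one_mulVec, dotProduct_smul]
    have h1 : (0:ℂ) < (δ:ℂ) := by
      rw [Complex.lt_def]; simp [hδ]
    exact mul_pos h1 (dotProduct_star_self_pos_iff.mpr hx)

lemma key_identity {M K : ℕ} (H : Matrix (Fin M) (Fin K) ℂ) (hH : IsUnit (Hᴴ * H))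
    (u : Fin K → ℂ) (γ : ℝ) {δ : ℝ} (hδ : 0 < δ) :
    H.mulVec (Hᴴ.mulVec (xVec H u γ δ) - (Real.sqrt γ : ℂ) • u)
      = (-(δ:ℂ)) • xVec H u γ δ := by
  set A : Matrix (Fin M) (Fin M) ℂ := H * Hᴴ + (δ : ℂ) • 1 with hA
  have hApd : A.PosDef := posdef_A (H * Hᴴ) (posSemidef_self_mul_conjTranspose H) hδ
  have hAinv : A * A⁻¹ = 1 := mul_nonsing_inv A (isUnit_iff_isUnit_det A |>.mp hApd.isUnit)
  have hb : Hᴴ.mulVec (bVec H u γ) = (Real.sqrt γ : ℂ) • u := by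
    rw [bVec, mulVec_smul, mulVec_mulVec, ← Matrix.mul_assoc,
      mul_nonsing_inv _ (isUnit_iff_isUnit_det _ |>.mp hH), one_mulVec]
  have hx : A.mulVec (xVec H u γ δ) = (H * Hᴴ).mulVec (bVec H u γ) := by
    rw [xVec, mulVec_mulVec, ← Matrix.mul_assoc, hAinv, Matrix.one_mul]
  have h1 : H.mulVec (Hᴴ.mulVec (xVec H u γ δ)) = (H * Hᴴ).mulVec (xVec H u γ δ) := by
    rw [mulVec_mulVec]
  have h2 : (H * Hᴴ).mulVec (bVec H u γ) = H.mulVec ((Real.sqrt γ : ℂ) • u) := by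
    rw [← hb, mulVec_mulVec]
  have h3 : (H * Hᴴ).mulVec (xVec H u γ δ)
      = (H*Hᴴ).mulVec (bVec H u γ) - (δ:ℂ) • xVec H u γ δ := by
    have := hx
    rw [hA, add_mulVec, smul_mulVec, one_mulVec] at this
    rw [← this]; abel
  rw [mulVec_sub, h1, h3, h2]
  simp [neg_smul]

/-- if `δ > 0` is such that `x_δᴴ x_δ = P_a`, then `x_δ` minimizes
`‖Hᴴ x − √γ u‖²` over the ball `{x : xᴴ x ≤ P_a}`. -/
theorem stmt0 {M K : ℕ} (hM : 0 < M) (hK : 0 < K)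
    (H : Matrix (Fin M) (Fin K) ℂ) (hH : IsUnit (Hᴴ * H))
    (u : Fin K → ℂ) (γ Pa : ℝ) (hγ : 0 < γ) (hPa : 0 < Pa)
    (δ : ℝ) (hδ : 0 < δ)
    (hpow : star (xVec H u γ δ) ⬝ᵥ xVec H u γ δ = (Pa : ℂ)) :
    ∀ x : Fin M → ℂ, star x ⬝ᵥ x ≤ (Pa : ℂ) →
      sqNorm (Hᴴ.mulVec (xVec H u γ δ) - (Real.sqrt γ : ℂ) • u) ≤
        sqNorm (Hᴴ.mulVec x - (Real.sqrt γ : ℂ) • u) := by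
  intro x hx
  set xd := xVec H u γ δ with hxd
  set c : Fin K → ℂ := (Real.sqrt γ : ℂ) • u with hc
  set r : Fin K → ℂ := Hᴴ.mulVec xd - c with hr
  set d : Fin M → ℂ := x - xd with hd
  have hsplit : Hᴴ.mulVec x - c = r + Hᴴ.mulVec d := by
    rw [hr, hd, mulVec_sub]; abel
  rw [hsplit, sqNorm_add]
  have hHr : H.mulVec r = (-(δ:ℂ)) • xd := key_identity H hH u γ hδ
  have hcross : (star r ⬝ᵥ Hᴴ.mulVec d) = (-(δ:ℂ)) * (star xd ⬝ᵥ x - (Pa:ℂ)) := by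
    rw [dotProduct_mulVec, ← star_mulVec, hHr]
    rw [star_smul, smul_dotProduct]
    congr 1
    · simp
    · rw [hd, dotProduct_sub, hpow]
  have hxd_norm : sqNorm xd = Pa := by rw [sqNorm_eq, hpow, Complex.ofReal_re]
  have hx_norm : sqNorm x ≤ Pa := by
    rw [sqNorm_eq]
    have := (Complex.le_def.mp hx).1
    simpa using this
  have h2Re : 2 * (star xd ⬝ᵥ x).re ≤ sqNorm xd + sqNorm x := by
    have h0 := sqNorm_nonneg (xd + (-x))
    have he : sqNorm (xd + (-x)) = sqNorm xd + sqNorm (-x) + 2 * (star xd ⬝ᵥ (-x)).re :=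
      sqNorm_add xd (-x)
    have hn : sqNorm (-x) = sqNorm x := by simp [sqNorm]
    rw [he, hn, dotProduct_neg] at h0
    simp only [Complex.neg_re] at h0
    linarith
  have hRe : (star xd ⬝ᵥ x).re ≤ Pa := by linarith
  have hcross_re : (star r ⬝ᵥ Hᴴ.mulVec d).re = -δ * ((star xd ⬝ᵥ x).re - Pa) := by
    rw [hcross]
    have : (-(δ:ℂ)) = ((-δ : ℝ) : ℂ) := by push_cast; ring
    rw [this, Complex.re_ofReal_mul]
    simp [Complex.sub_re]
  rw [hcross_re]
  have := sqNorm_nonneg (Hᴴ.mulVec d)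
  nlinarith
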